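/- Let y : A → ℝ≥0 be nonnegative arc weights, c' : A → ℝ≥0 scaled arc costs, and 𝒫 a set of paths (arc sets). For γ ≥ 0 define y^γ_e := y_e if c'_e ≥ γ, and y^γ_e := +∞ otherwise, and let π(γ) be the minimum of Σ_{e ∈ P} y^γ_e over P ∈ 𝒫. Then there exists a path P ∈ 𝒫 with Σ_{e ∈ P} y_e < min_{e ∈ P} c'_e if and only if π(γ) < γ for some γ in the finite set Γ := {c'_e : e ∈ A}. -/

import Mathlib

/-- Dual separation by shortest paths.  For nonnegative arc
weights `y` and scaled costs `c'` on a finite arc set `A`, define for `γ ≥ 0`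
the modified weights `y^γ_e = y_e` if `c'_e ≥ γ` and `+∞` otherwise, and
`π(γ)` the minimum modified length over the path family `𝒫` (each path a
nonempty arc set).  Then some path violates its dual constraint
`∑_{e∈P} y_e ≥ min_{e∈P} c'_e` iff `π(γ) < γ` for some `γ ∈ {c'_e : e ∈ A}`. -/
theorem dual_separation_shortest_paths {α : Type*} [Fintype α] [DecidableEq α]
    (Paths : Finset (Finset α)) (hne : Paths.Nonempty)
    (hnonempty : ∀ P ∈ Paths, P.Nonempty)
    (y c' : α → ℝ) (hy : ∀ e, 0 ≤ y e) (hc' : ∀ e, 0 ≤ c' e) :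
    (∃ P ∈ Paths, ∀ f ∈ P, ∑ e ∈ P, y e < c' f) ↔
    (∃ a : α, Paths.inf' hne
        (fun P => ∑ e ∈ P,
          (if c' a ≤ c' e then ENNReal.ofReal (y e) else (⊤ : ENNReal)))
      < ENNReal.ofReal (c' a)) := by
  constructor
  · rintro ⟨P, hP, hviol⟩
    obtain ⟨a, ha, hamin⟩ := Finset.exists_min_image P c' (hnonempty P hP)
    refine ⟨a, lt_of_le_of_lt (Finset.inf'_le _ hP) ?_⟩
    have : ∀ e ∈ P, (if c' a ≤ c' e then ENNReal.ofReal (y e) else (⊤ : ENNReal))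
        = ENNReal.ofReal (y e) := fun e he => if_pos (hamin e he)
    rw [Finset.sum_congr rfl this, ← ENNReal.ofReal_sum_of_nonneg (fun e _ => hy e)]
    exact ENNReal.ofReal_lt_ofReal_iff_of_nonneg
      (Finset.sum_nonneg fun e _ => hy e) |>.mpr (hviol a ha)
  · rintro ⟨a, hlt⟩
    obtain ⟨P, hP, hPeq⟩ := Finset.exists_mem_eq_inf' hne
      (fun P => ∑ e ∈ P, (if c' a ≤ c' e then ENNReal.ofReal (y e) else (⊤ : ENNReal)))
    rw [hPeq] at hlt
    have hfin : ∀ e ∈ P, c' a ≤ c' e := by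
      intro e he
      by_contra h
      have : (⊤ : ENNReal) ≤ ∑ e ∈ P,
          (if c' a ≤ c' e then ENNReal.ofReal (y e) else (⊤ : ENNReal)) := by
        refine le_trans ?_ (Finset.single_le_sum (f := fun e =>
          (if c' a ≤ c' e then ENNReal.ofReal (y e) else (⊤ : ENNReal)))
          (fun _ _ => zero_le) he)
        exact le_of_eq (if_neg h).symm
      exact absurd (lt_of_le_of_lt this hlt) (by simp)
    have hsum : (∑ e ∈ P, (if c' a ≤ c' e then ENNReal.ofReal (y e) else (⊤ : ENNReal)))
        = ENNReal.ofReal (∑ e ∈ P, y e) := by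
      rw [Finset.sum_congr rfl (fun e he => if_pos (hfin e he)),
        ENNReal.ofReal_sum_of_nonneg (fun e _ => hy e)]
    rw [hsum] at hlt
    have hya : ∑ e ∈ P, y e < c' a :=
      ((ENNReal.ofReal_lt_ofReal_iff_of_nonneg (Finset.sum_nonneg fun e _ => hy e)).mp hlt)
    exact ⟨P, hP, fun f hf => lt_of_lt_of_le hya (hfin f hf)⟩
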